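/- Let J ∈ 𝒥_{k,N} with N = kn − ℓ, 0 ≤ ℓ < k, and let μ = φ(J) be its spectral measure. Then for every integer d ≥ n: (i) there exists a monic matrix polynomial Π of degree d with ⟨Π, Π⟩_μ = 0; (ii) dim 𝒩_d(μ) = k(d+1) − N; and (iii) every monic matrix polynomial Π_d of degree d satisfying ⟨Π_d, P⟩_μ = 0 for all matrix polynomials P of degree less than d satisfies ⟨Π_d, Π_d⟩_μ = 0. -/

import Mathlib

open Matrix Polynomial

noncomputable section

/-- `Esel k N b` is the block selection matrix `E_{b+1} ∈ ℂ^{N×k}` whose rows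
`b*k, …, b*k + (k-1)` form the identity `I_k` (zero-based indexing). -/
def Esel (k N : ℕ) (b : ℕ) : Matrix (Fin N) (Fin k) ℂ :=
  Matrix.of fun i a => if (i : ℕ) = b * k + (a : ℕ) then 1 else 0

/-- The last (possibly smaller) block selection matrix `E_n ∈ ℂ^{N×(k-ℓ)}`. -/
def EselLast (k n ℓ : ℕ) : Matrix (Fin (n * k - ℓ)) (Fin (k - ℓ)) ℂ :=
  Matrix.of fun i a => if (i : ℕ) = (n - 1) * k + (a : ℕ) then 1 else 0

/-- A square matrix is upper triangular with (real) positive diagonal entries. -/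
def UpperTriPosDiag {k : ℕ} (M : Matrix (Fin k) (Fin k) ℂ) : Prop :=
  ∀ r c : Fin k, ((c : ℕ) < (r : ℕ) → M r c = 0) ∧ (r = c → 0 < (M r c).re ∧ (M r c).im = 0)

/-- A (rectangular) matrix is in row echelon form with positive pivots. -/
def RowEchelonPosPivots {r m : ℕ} (R : Matrix (Fin r) (Fin m) ℂ) : Prop :=
  ∃ p : Fin r → Fin m, StrictMono p ∧
    ∀ i : Fin r, (0 < (R i (p i)).re ∧ (R i (p i)).im = 0) ∧
      ∀ j : Fin m, (j : ℕ) < (p i : ℕ) → R i j = 0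

/-- The class `𝒥_{k,N}` (`N = n*k - ℓ`): Hermitian block tridiagonal matrices with
`k×k` blocks (the last diagonal block of size `(k-ℓ)×(k-ℓ)`), subdiagonal blocks
`B_0,…,B_{n-3}` upper triangular with positive diagonal and `B_{n-2}` in row echelon
form with positive pivots. -/
def IsJkN (k n ℓ : ℕ) (J : Matrix (Fin (n * k - ℓ)) (Fin (n * k - ℓ)) ℂ) : Prop :=
  J.IsHermitian ∧
  (∀ i j : Fin (n * k - ℓ),
      ((i : ℕ) / k + 2 ≤ (j : ℕ) / k ∨ (j : ℕ) / k + 2 ≤ (i : ℕ) / k) → J i j = 0) ∧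
  (∀ b : ℕ, b + 3 ≤ n →
      UpperTriPosDiag ((Esel k (n * k - ℓ) (b + 1))ᴴ * J * Esel k (n * k - ℓ) b)) ∧
  RowEchelonPosPivots ((EselLast k n ℓ)ᴴ * J * Esel k (n * k - ℓ) (n - 2))


/-- The set `𝒩_d` of `ℂ^k`-valued polynomials `p` of degree at most `d` with
`Σ_j |v_j^* p(λ_j)|² = 0`. -/
def NcalSet (k N : ℕ) (d : ℕ) (lam : Fin N → ℝ) (v : Fin N → Fin k → ℂ) :
    Set (Fin k → Polynomial ℂ) :=
  {p | (∀ a, (p a).degree ≤ (d : ℕ)) ∧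
      ∑ j, Complex.normSq (∑ a, star (v j a) * (p a).eval ((lam j : ℂ))) = 0}

/-- The quasi-inner product `⟨P,Q⟩_μ = Σ_j P(λ_j)^* v_j v_j^* Q(λ_j)` of matrix
polynomials with respect to the spectral measure. -/
def innerPoly {k N : ℕ} (lam : Fin N → ℝ) (v : Fin N → Fin k → ℂ)
    (P Q : Polynomial (Matrix (Fin k) (Fin k) ℂ)) : Matrix (Fin k) (Fin k) ℂ :=
  ∑ j, (P.eval ((lam j : ℂ) • (1 : Matrix (Fin k) (Fin k) ℂ)))ᴴ *
      vecMulVec (v j) (star (v j)) *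
      Q.eval ((lam j : ℂ) • (1 : Matrix (Fin k) (Fin k) ℂ))

lemma upperTri_echelon {k : ℕ} {M : Matrix (Fin k) (Fin k) ℂ}
    (h : UpperTriPosDiag M) : RowEchelonPosPivots M :=
  ⟨id, strictMono_id, fun i => ⟨(h i i).2 rfl, fun j hj => (h i j).1 hj⟩⟩

lemma echelon_star_inj {r m : ℕ} {R : Matrix (Fin r) (Fin m) ℂ}
    (h : RowEchelonPosPivots R) (x : Fin r → ℂ)
    (hx : ∀ j : Fin m, ∑ i, (starRingEnd ℂ) (R i j) * x i = 0) : x = 0 := by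
  obtain ⟨p, hp, hR⟩ := h
  have key : ∀ mval : ℕ, ∀ i : Fin r, (i : ℕ) = mval → x i = 0 := by
    intro mval
    induction mval using Nat.strong_induction_on with
    | _ mval IH =>
      intro i him
      have h0 := hx (p i)
      rw [Finset.sum_eq_single i] at h0
      · have hpiv : R i (p i) ≠ 0 := by
          intro hc
          have := (hR i).1.1
          rw [hc] at this; simp at this
        have : (starRingEnd ℂ) (R i (p i)) ≠ 0 := by
          simpa using hpiv
        rcases mul_eq_zero.mp h0 with h' | h'
        · exact absurd h' this
        · exact h'
      · intro b _ hbi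
        rcases lt_trichotomy (b : ℕ) (i : ℕ) with hlt | heq | hgt
        · rw [IH (b : ℕ) (him ▸ hlt) b rfl, mul_zero]
        · exact absurd (Fin.ext heq) hbi
        · have : ((p i : ℕ)) < ((p b : ℕ)) := hp (by exact hgt)
          rw [(hR b).2 (p i) this, map_zero, zero_mul]
      · intro hi; exact absurd (Finset.mem_univ i) hi
  funext i
  exact key (i : ℕ) i rfl

lemma sel_mul_entry {N m₁ m₂ : ℕ} (J : Matrix (Fin N) (Fin N) ℂ) (o₁ o₂ : ℕ)
    (r : Fin m₁) (c : Fin m₂) (h₁ : o₁ + (r : ℕ) < N) (h₂ : o₂ + (c : ℕ) < N) :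
    ((Matrix.of fun (i : Fin N) (a : Fin m₁) => if (i : ℕ) = o₁ + (a : ℕ) then (1 : ℂ) else 0)ᴴ
        * J *
      (Matrix.of fun (i : Fin N) (a : Fin m₂) => if (i : ℕ) = o₂ + (a : ℕ) then (1 : ℂ) else 0))
      r c = J ⟨o₁ + (r : ℕ), h₁⟩ ⟨o₂ + (c : ℕ), h₂⟩ := by
  rw [Matrix.mul_assoc, Matrix.mul_apply]
  rw [Finset.sum_eq_single (⟨o₁ + (r : ℕ), h₁⟩ : Fin N)]
  · rw [Matrix.conjTranspose_apply, Matrix.of_apply, if_pos rfl, Matrix.mul_apply]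
    rw [Finset.sum_eq_single (⟨o₂ + (c : ℕ), h₂⟩ : Fin N)]
    · simp
    · intro b _ hb
      rw [Matrix.of_apply, if_neg, mul_zero]
      intro hc; exact hb (Fin.ext hc)
    · intro hmem; exact absurd (Finset.mem_univ _) hmem
  · intro b _ hb
    rw [Matrix.conjTranspose_apply, Matrix.of_apply, if_neg, star_zero, zero_mul]
    intro hc; exact hb (Fin.ext hc)
  · intro hmem; exact absurd (Finset.mem_univ _) hmem

lemma blkdiv {k : ℕ} (hk : 0 < k) (c a : ℕ) (ha : a < k) : (c * k + a) / k = c := by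
  rw [Nat.add_comm, Nat.mul_comm, Nat.add_mul_div_left _ _ hk, Nat.div_eq_of_lt ha, Nat.zero_add]

lemma blkidx_lt {k n ℓ c a : ℕ} (hℓ : ℓ < k) (hc : c + 2 ≤ n) (ha : a < k) :
    c * k + a < n * k - ℓ := by
  have h1 : (c + 1) * k ≤ (n - 1) * k := Nat.mul_le_mul_right k (by omega)
  have h2 : (n - 1) * k + k = n * k := by
    have : (n - 1) + 1 = n := by omega
    rw [← Nat.succ_mul]; rw [Nat.succ_eq_add_one, this]
  rw [Nat.add_mul, one_mul] at h1
  omega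

lemma lastidx_lt {k n ℓ a : ℕ} (hn : 1 ≤ n) (ha : a < k - ℓ) :
    (n - 1) * k + a < n * k - ℓ := by
  have h2 : (n - 1) * k + k = n * k := by
    have : (n - 1) + 1 = n := by omega
    rw [← Nat.succ_mul]; rw [Nat.succ_eq_add_one, this]
  omega

section Tridiag

variable {k N : ℕ} (J : Matrix (Fin N) (Fin N) ℂ)
variable (htri : ∀ i j : Fin N, ((i : ℕ) / k + 2 ≤ (j : ℕ) / k ∨ (j : ℕ) / k + 2 ≤ (i : ℕ) / k) → J i j = 0)

include htri in
lemma mulVec_block_zero (c : ℕ) (u : Fin N → ℂ)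
    (hu : ∀ i : Fin N, (i : ℕ) / k < c → u i = 0)
    (i : Fin N) (hi : (i : ℕ) / k + 1 < c) : (J *ᵥ u) i = 0 := by
  simp only [Matrix.mulVec, dotProduct]
  apply Finset.sum_eq_zero
  intro j _
  rcases Nat.lt_or_ge ((j : ℕ) / k) c with h | h
  · rw [hu j h, mul_zero]
  · rw [htri i j (Or.inl (by omega)), zero_mul]

include htri in
lemma mulVec_pow_block_zero : ∀ (s c : ℕ) (u : Fin N → ℂ),
    (∀ i : Fin N, (i : ℕ) / k < c → u i = 0) →
    ∀ i : Fin N, (i : ℕ) / k + s < c → ((J ^ s) *ᵥ u) i = 0 := by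
  intro s
  induction s with
  | zero =>
    intro c u hu i hi
    rw [pow_zero, Matrix.one_mulVec]
    exact hu i (by omega)
  | succ s IH =>
    intro c u hu i hi
    have hc1 : 1 ≤ c := lt_of_le_of_lt (Nat.zero_le _) hi
    have hrw : (J ^ (s + 1)) *ᵥ u = (J ^ s) *ᵥ (J *ᵥ u) := by
      rw [pow_succ, Matrix.mulVec_mulVec]
    rw [hrw]
    exact IH (c - 1) (J *ᵥ u)
      (fun p hp => mulVec_block_zero J htri c u hu p (by omega)) i (by omega)

include htri in
lemma mulVec_block_filter (c : ℕ) (u : Fin N → ℂ)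
    (hu : ∀ i : Fin N, (i : ℕ) / k < c → u i = 0)
    {m : ℕ} (emb : Fin m → Fin N)
    (hemb : Function.Injective emb)
    (hblk : ∀ j : Fin N, (j : ℕ) / k = c ↔ ∃ a : Fin m, emb a = j)
    (i : Fin N) (hi : (i : ℕ) / k + 1 = c) :
    (J *ᵥ u) i = ∑ a : Fin m, J i (emb a) * u (emb a) := by
  simp only [Matrix.mulVec, dotProduct]
  have himg : ∑ j ∈ Finset.univ.image emb, J i j * u j
      = ∑ a : Fin m, J i (emb a) * u (emb a) :=
    Finset.sum_image (fun a _ b _ h => hemb h)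
  rw [← himg]
  symm
  apply Finset.sum_subset (Finset.subset_univ _)
  intro j _ hj
  have hnotc : (j : ℕ) / k ≠ c := by
    intro hc
    obtain ⟨a, ha⟩ := (hblk j).mp hc
    exact hj (Finset.mem_image.mpr ⟨a, Finset.mem_univ a, ha⟩)
  rcases Nat.lt_or_ge ((j : ℕ) / k) c with h | h
  · rw [hu j h, mul_zero]
  · rw [htri i j (Or.inl (by omega)), zero_mul]

end Tridiag

lemma idx_decomp {k : ℕ} (hk : 0 < k) (j c : ℕ) (h : j / k = c) :
    j = c * k + j % k := by
  have h1 := Nat.div_add_mod j k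
  rw [h, Nat.mul_comm] at h1
  omega

lemma lastmod_lt {k n ℓ : ℕ} (hk : 0 < k) (hℓ : ℓ < k) (hn : 1 ≤ n)
    (j : Fin (n * k - ℓ)) (hj : (j : ℕ) / k = n - 1) : (j : ℕ) % k < k - ℓ := by
  have hd := idx_decomp hk (j:ℕ) (n - 1) hj
  have h2 : (n - 1) * k + k = n * k := by
    have h3 : (n - 1) + 1 = n := by omega
    rw [← Nat.succ_mul, Nat.succ_eq_add_one, h3]
  have := j.isLt
  omega

lemma claimA {k n ℓ : ℕ} (hk : 1 ≤ k) (hn : 2 ≤ n) (hℓ : ℓ < k)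
    (J : Matrix (Fin (n * k - ℓ)) (Fin (n * k - ℓ)) ℂ) (hJ : IsJkN k n ℓ J)
    (w : Fin (n * k - ℓ) → ℂ)
    (hw : ∀ s : ℕ, s < n → ∀ i : Fin (n * k - ℓ), (i : ℕ) < k → ((J ^ s) *ᵥ w) i = 0) :
    w = 0 := by
  obtain ⟨hherm, htri, hsub, hlast⟩ := hJ
  have hk0 : 0 < k := hk
  have hup : ∀ i : Fin (n * k - ℓ), (i : ℕ) / k < n := by
    intro i
    rw [Nat.div_lt_iff_lt_mul hk0]
    have := i.isLt
    omega
  have hdivlt : ∀ i : Fin (n * k - ℓ), (i : ℕ) / k < 1 → (i : ℕ) < k := by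
    intro i hi
    have h1 : (i : ℕ) / k = 0 := Nat.lt_one_iff.mp hi
    have h2 := Nat.div_add_mod (i : ℕ) k
    have h3 := Nat.mod_lt (i : ℕ) hk0
    rw [h1, Nat.mul_zero, Nat.zero_add] at h2
    omega
  have main : ∀ b : ℕ, b + 1 ≤ n → ∀ i : Fin (n * k - ℓ), (i : ℕ) / k < b + 1 → w i = 0 := by
    intro b
    induction b with
    | zero =>
      intro _ i hi
      have h0 := hw 0 (by omega) i (hdivlt i hi)
      rwa [pow_zero, Matrix.one_mulVec] at h0
    | succ b IH =>
      intro hb1 i hi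
      have Vb : ∀ p : Fin (n * k - ℓ), (p : ℕ) / k < b + 1 → w p = 0 := IH (by omega)
      rcases Nat.lt_or_ge ((i : ℕ) / k) (b + 1) with h | h
      · exact Vb i h
      have hib : (i : ℕ) / k = b + 1 := by omega
      have In : ∀ r : ℕ, r ≤ b + 1 → ∀ p : Fin (n * k - ℓ), (p : ℕ) / k = r →
          ((J ^ (b + 1 - r)) *ᵥ w) p = 0 := by
        intro r
        induction r with
        | zero =>
          intro _ p hp
          exact hw (b + 1) (by omega) p (hdivlt p (by rw [hp]; norm_num))
        | succ r IHr =>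
          intro hr p hp
          have hbr : b + 1 - (r + 1) = b - r := by omega
          rw [hbr]
          set u : Fin (n * k - ℓ) → ℂ := (J ^ (b - r)) *ᵥ w with hu_def
          have hu : ∀ q : Fin (n * k - ℓ), (q : ℕ) / k < r + 1 → u q = 0 := by
            intro q hq
            exact mulVec_pow_block_zero J htri (b - r) (b + 1) w Vb q (by omega)
          have hJu : ∀ q : Fin (n * k - ℓ), (q : ℕ) / k = r → (J *ᵥ u) q = 0 := by
            intro q hq
            have e1 : J *ᵥ u = (J ^ (b + 1 - r)) *ᵥ w := by
              rw [hu_def, Matrix.mulVec_mulVec]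
              congr 1
              rw [show b + 1 - r = (b - r) + 1 by omega, pow_succ']
            rw [e1]
            exact IHr (by omega) q hq
          rcases Nat.lt_or_ge (r + 3) (n + 1) with hcase | hcase
          · -- interior block : r + 3 ≤ n
            have hrn : r + 3 ≤ n := by omega
            set emb : Fin k → Fin (n * k - ℓ) :=
              fun a => ⟨(r + 1) * k + (a : ℕ), blkidx_lt hℓ (by omega) a.isLt⟩ with hemb_def
            have hembinj : Function.Injective emb := by
              intro a1 a2 hh
              have h2 : (r + 1) * k + (a1 : ℕ) = (r + 1) * k + (a2 : ℕ) :=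
                congrArg (fun t : Fin (n * k - ℓ) => (t : ℕ)) hh
              exact Fin.ext (Nat.add_left_cancel h2)
            have hblk : ∀ j : Fin (n * k - ℓ), (j : ℕ) / k = r + 1 ↔ ∃ a : Fin k, emb a = j := by
              intro j
              constructor
              · intro hj
                exact ⟨⟨(j : ℕ) % k, Nat.mod_lt _ hk0⟩, Fin.ext (idx_decomp hk0 (j:ℕ) (r + 1) hj).symm⟩
              · rintro ⟨a, rfl⟩
                exact blkdiv hk0 (r + 1) (a : ℕ) a.isLt
            have hx : ∀ j' : Fin k,
                ∑ a : Fin k, (starRingEnd ℂ)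
                  (((Esel k (n * k - ℓ) (r + 1))ᴴ * J * Esel k (n * k - ℓ) r) a j')
                  * u (emb a) = 0 := by
              intro j'
              set q : Fin (n * k - ℓ) := ⟨r * k + (j' : ℕ), blkidx_lt hℓ (by omega) j'.isLt⟩
                with hq_def
              have hq : (q : ℕ) / k = r := blkdiv hk0 r (j' : ℕ) j'.isLt
              have h0 : (J *ᵥ u) q = 0 := hJu q hq
              rw [mulVec_block_filter J htri (r + 1) u hu emb hembinj hblk q
                (by rw [hq])] at h0
              rw [← h0]
              apply Finset.sum_congr rfl
              intro a _
              congr 1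
              have hB : ((Esel k (n * k - ℓ) (r + 1))ᴴ * J * Esel k (n * k - ℓ) r) a j'
                  = J (emb a) q := by
                unfold Esel
                exact sel_mul_entry J ((r + 1) * k) (r * k) a j' (emb a).isLt q.isLt
              rw [hB, starRingEnd_apply, ← Matrix.conjTranspose_apply, hherm.eq]
            have hx0 := echelon_star_inj (upperTri_echelon (hsub r (by omega))) _ hx
            have hpk : (p : ℕ) % k < k := Nat.mod_lt _ hk0
            have hpe : p = emb ⟨(p : ℕ) % k, hpk⟩ := Fin.ext (idx_decomp hk0 (p:ℕ) (r + 1) hp)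
            rw [hpe]
            exact congrFun hx0 ⟨(p : ℕ) % k, hpk⟩
          · -- last block : r + 1 = n - 1
            have hr1 : r + 1 = n - 1 := by omega
            have hrn2 : r = n - 2 := by omega
            set emb : Fin (k - ℓ) → Fin (n * k - ℓ) :=
              fun a => ⟨(n - 1) * k + (a : ℕ), lastidx_lt (by omega) a.isLt⟩ with hemb_def
            have hembinj : Function.Injective emb := by
              intro a1 a2 hh
              have h2 : (n - 1) * k + (a1 : ℕ) = (n - 1) * k + (a2 : ℕ) :=
                congrArg (fun t : Fin (n * k - ℓ) => (t : ℕ)) hh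
              exact Fin.ext (Nat.add_left_cancel h2)
            have hblk : ∀ j : Fin (n * k - ℓ), (j : ℕ) / k = r + 1 ↔ ∃ a : Fin (k - ℓ), emb a = j := by
              intro j
              constructor
              · intro hj
                rw [hr1] at hj
                refine ⟨⟨(j : ℕ) % k, lastmod_lt hk0 hℓ (by omega) j hj⟩,
                  Fin.ext (idx_decomp hk0 (j:ℕ) (n - 1) hj).symm⟩
              · rintro ⟨a, rfl⟩
                rw [hr1]
                exact blkdiv hk0 (n - 1) (a : ℕ) (by omega)
            have hx : ∀ j' : Fin k,
                ∑ a : Fin (k - ℓ), (starRingEnd ℂ)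
                  (((EselLast k n ℓ)ᴴ * J * Esel k (n * k - ℓ) (n - 2)) a j')
                  * u (emb a) = 0 := by
              intro j'
              set q : Fin (n * k - ℓ) := ⟨(n - 2) * k + (j' : ℕ), blkidx_lt hℓ (by omega) j'.isLt⟩
                with hq_def
              have hq : (q : ℕ) / k = r := by
                rw [hrn2]
                exact blkdiv hk0 (n - 2) (j' : ℕ) j'.isLt
              have h0 : (J *ᵥ u) q = 0 := hJu q hq
              rw [mulVec_block_filter J htri (r + 1) u hu emb hembinj hblk q
                (by rw [hq])] at h0
              rw [← h0]
              apply Finset.sum_congr rfl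
              intro a _
              congr 1
              have hB : ((EselLast k n ℓ)ᴴ * J * Esel k (n * k - ℓ) (n - 2)) a j'
                  = J (emb a) q := by
                unfold EselLast Esel
                exact sel_mul_entry J ((n - 1) * k) ((n - 2) * k) a j' (emb a).isLt q.isLt
              rw [hB, starRingEnd_apply, ← Matrix.conjTranspose_apply, hherm.eq]
            have hx0 := echelon_star_inj hlast _ hx
            have hpk : (p : ℕ) % k < k - ℓ := by
              apply lastmod_lt hk0 hℓ (by omega) p
              rw [← hr1]; exact hp
            have hpe : p = emb ⟨(p : ℕ) % k, hpk⟩ := by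
              apply Fin.ext
              have := idx_decomp hk0 (p:ℕ) (r + 1) hp
              rw [hr1] at this
              exact this
            rw [hpe]
            exact congrFun hx0 ⟨(p : ℕ) % k, hpk⟩
      have hfin := In (b + 1) le_rfl i hib
      rwa [Nat.sub_self, pow_zero, Matrix.one_mulVec] at hfin
  funext i
  have hend := main (n - 1) (by omega) i (by have := hup i; omega)
  simpa using hend

lemma key_surj {k n ℓ : ℕ} (hk : 1 ≤ k) (hn : 2 ≤ n) (hℓ : ℓ < k)
    (J : Matrix (Fin (n * k - ℓ)) (Fin (n * k - ℓ)) ℂ) (hJ : IsJkN k n ℓ J)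
    (lam : Fin (n * k - ℓ) → ℝ) (vhat : Fin (n * k - ℓ) → (Fin (n * k - ℓ) → ℂ))
    (heig : ∀ j, J.mulVec (vhat j) = (lam j : ℂ) • vhat j)
    (horth : ∀ i j, ∑ a, star (vhat i a) * vhat j a = if i = j then 1 else 0)
    (v : Fin (n * k - ℓ) → Fin k → ℂ)
    (hv : ∀ j, v j = (Esel k (n * k - ℓ) 0)ᴴ.mulVec (vhat j)) :
    ∀ z : Fin (n * k - ℓ) → ℂ, ∃ c : ℕ → Fin k → ℂ,
      ∀ j, ∑ b : Fin k, star (v j b) * (∑ s ∈ Finset.range n, c s b * ((lam j : ℂ)) ^ s)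
        = z j := by
  have hkN : ∀ b : Fin k, (b : ℕ) < n * k - ℓ := by
    intro b
    have h1 := b.isLt
    have h2 : 2 * k ≤ n * k := Nat.mul_le_mul_right k hn
    omega
  set e1 : Fin k → (Fin (n * k - ℓ) → ℂ) :=
    fun b i => if (i : ℕ) = (b : ℕ) then 1 else 0 with he1_def
  have hvv : ∀ j (b : Fin k), v j b = vhat j ⟨(b : ℕ), hkN b⟩ := by
    intro j b
    rw [hv]
    simp only [Matrix.mulVec, dotProduct, Matrix.conjTranspose_apply]
    rw [Finset.sum_eq_single (⟨(b : ℕ), hkN b⟩ : Fin (n * k - ℓ))]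
    · rw [show Esel k (n * k - ℓ) 0 ⟨(b : ℕ), hkN b⟩ b = 1 from by
        simp [Esel]]
      simp
    · intro p _ hp
      rw [show Esel k (n * k - ℓ) 0 p b = 0 from by
        simp only [Esel, Matrix.of_apply, Nat.zero_mul, Nat.zero_add]
        rw [if_neg]
        intro hc; exact hp (Fin.ext hc), star_zero, zero_mul]
    · intro hmem; exact absurd (Finset.mem_univ _) hmem
  have hGy : ∀ (s : ℕ) (b : Fin k) (j : Fin (n * k - ℓ)),
      ∑ i, star (vhat j i) * ((J ^ s) *ᵥ e1 b) i = ((lam j : ℂ)) ^ s * star (v j b) := by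
    intro s
    induction s with
    | zero =>
      intro b j
      rw [pow_zero, Matrix.one_mulVec, pow_zero, one_mul]
      rw [Finset.sum_eq_single (⟨(b : ℕ), hkN b⟩ : Fin (n * k - ℓ))]
      · rw [show e1 b ⟨(b : ℕ), hkN b⟩ = 1 from by simp [he1_def], mul_one, hvv]
      · intro p _ hp
        rw [show e1 b p = 0 from by
          simp only [he1_def]
          rw [if_neg]
          intro hc; exact hp (Fin.ext hc), mul_zero]
      · intro hmem; exact absurd (Finset.mem_univ _) hmem
    | succ s IH =>
      intro b j
      have hsplit : (J ^ (s + 1)) *ᵥ e1 b = J *ᵥ ((J ^ s) *ᵥ e1 b) := by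
        rw [Matrix.mulVec_mulVec, ← pow_succ']
      rw [hsplit]
      have hcol : ∀ p, ∑ i, star (vhat j i) * J i p = (lam j : ℂ) * star (vhat j p) := by
        intro p
        calc ∑ i, star (vhat j i) * J i p
            = star (∑ i, star (J i p) * vhat j i) := by
              rw [star_sum]
              refine Finset.sum_congr rfl fun i _ => ?_
              rw [star_mul', star_star]
              exact mul_comm _ _
          _ = star ((Jᴴ *ᵥ vhat j) p) := by
              simp [Matrix.mulVec, dotProduct, Matrix.conjTranspose_apply]
          _ = star ((J *ᵥ vhat j) p) := by rw [hJ.1.eq]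
          _ = star ((lam j : ℂ) * vhat j p) := by rw [heig j]; simp
          _ = (lam j : ℂ) * star (vhat j p) := by
              rw [star_mul']
              congr 1
              exact Complex.conj_ofReal (lam j)
      calc ∑ i, star (vhat j i) * (J *ᵥ ((J ^ s) *ᵥ e1 b)) i
          = ∑ i, ∑ p, star (vhat j i) * (J i p * ((J ^ s) *ᵥ e1 b) p) := by
            simp [Matrix.mulVec, dotProduct, Finset.mul_sum]
        _ = ∑ p, ∑ i, star (vhat j i) * (J i p * ((J ^ s) *ᵥ e1 b) p) := Finset.sum_comm
        _ = ∑ p, (∑ i, star (vhat j i) * J i p) * ((J ^ s) *ᵥ e1 b) p := by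
            refine Finset.sum_congr rfl fun p _ => ?_
            rw [Finset.sum_mul]
            refine Finset.sum_congr rfl fun i _ => ?_
            ring
        _ = (lam j : ℂ) * ∑ p, star (vhat j p) * ((J ^ s) *ᵥ e1 b) p := by
            rw [Finset.mul_sum]
            refine Finset.sum_congr rfl fun p _ => ?_
            rw [hcol p]
            ring
        _ = ((lam j : ℂ)) ^ (s + 1) * star (v j b) := by
            rw [IH b j]; ring
  set Y : Matrix (Fin n × Fin k) (Fin (n * k - ℓ)) ℂ :=
    Matrix.of (fun sb i => ((J ^ ((sb.1 : ℕ))) *ᵥ e1 sb.2) i) with hY_def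
  have hΨinj : Function.Injective Y.mulVecLin := by
    rw [← LinearMap.ker_eq_bot, LinearMap.ker_eq_bot']
    intro w hw0
    rw [Matrix.mulVecLin_apply] at hw0
    have hsw : star w = 0 := by
      apply claimA hk hn hℓ J hJ
      intro s hs i hik
      have hYw : (Y *ᵥ w) (⟨s, hs⟩, ⟨(i : ℕ), hik⟩) = 0 := by rw [hw0]; rfl
      have hcol : ∀ p : Fin (n * k - ℓ),
          ((J ^ s) *ᵥ e1 ⟨(i : ℕ), hik⟩) p = (J ^ s) p ⟨(i : ℕ), hkN ⟨(i : ℕ), hik⟩⟩ := by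
        intro p
        simp only [Matrix.mulVec, dotProduct]
        rw [Finset.sum_eq_single (⟨(i : ℕ), hkN ⟨(i : ℕ), hik⟩⟩ : Fin (n * k - ℓ))]
        · rw [show e1 ⟨(i : ℕ), hik⟩ ⟨(i : ℕ), hkN ⟨(i : ℕ), hik⟩⟩ = 1 from by
            simp [he1_def], mul_one]
        · intro q _ hq
          rw [show e1 ⟨(i : ℕ), hik⟩ q = 0 from by
            simp only [he1_def]
            rw [if_neg]
            intro hc; exact hq (Fin.ext hc), mul_zero]
        · intro hmem; exact absurd (Finset.mem_univ _) hmem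
      have hii : (⟨(i : ℕ), hkN ⟨(i : ℕ), hik⟩⟩ : Fin (n * k - ℓ)) = i := Fin.ext rfl
      calc ((J ^ s) *ᵥ star w) i = ((J ^ s)ᴴ *ᵥ star w) i := by rw [(hJ.1.pow s).eq]
        _ = ∑ p, star ((J ^ s) p i) * star (w p) := by
            simp [Matrix.mulVec, dotProduct, Matrix.conjTranspose_apply]
        _ = star (∑ p, (J ^ s) p i * w p) := by
            rw [star_sum]
            exact Finset.sum_congr rfl fun p _ => (star_mul' _ _).symm
        _ = star (∑ p, ((J ^ s) *ᵥ e1 ⟨(i : ℕ), hik⟩) p * w p) := by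
            congr 1
            refine Finset.sum_congr rfl fun p _ => ?_
            rw [hcol p, hii]
        _ = star ((Y *ᵥ w) (⟨s, hs⟩, ⟨(i : ℕ), hik⟩)) := by congr 1
        _ = 0 := by rw [hYw, star_zero]
    have := congrArg star hsw
    rwa [star_star, star_zero] at this
  have hrank' : Module.finrank ℂ (LinearMap.range (Yᵀ).mulVecLin) = n * k - ℓ := by
    have h1 : Module.finrank ℂ (LinearMap.range Y.mulVecLin) = n * k - ℓ := by
      rw [LinearMap.finrank_range_of_inj hΨinj, Module.finrank_fintype_fun_eq_card,
        Fintype.card_fin]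
    have h2 : (Yᵀ).rank = Y.rank := Matrix.rank_transpose Y
    exact h2.trans h1
  have hsurjT : Function.Surjective (Yᵀ).mulVecLin := by
    rw [← LinearMap.range_eq_top]
    apply Submodule.eq_top_of_finrank_eq
    rw [hrank', Module.finrank_fintype_fun_eq_card, Fintype.card_fin]
  set M : Matrix (Fin (n * k - ℓ)) (Fin (n * k - ℓ)) ℂ :=
    Matrix.of (fun j i => star (vhat j i)) with hM_def
  have hMM : M * Mᴴ = 1 := by
    ext j j'
    rw [Matrix.mul_apply, Matrix.one_apply]
    calc ∑ i, M j i * Mᴴ i j' = ∑ i, star (vhat j i) * vhat j' i := by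
          refine Finset.sum_congr rfl fun i _ => ?_
          rw [Matrix.conjTranspose_apply, hM_def]
          simp
      _ = if j = j' then 1 else 0 := horth j j'
  intro z
  obtain ⟨cc, hcc⟩ : ∃ cc : Fin n × Fin k → ℂ, (Yᵀ) *ᵥ cc = Mᴴ *ᵥ z := by
    obtain ⟨cc, h⟩ := hsurjT (Mᴴ *ᵥ z)
    exact ⟨cc, by rw [← h, Matrix.mulVecLin_apply]⟩
  refine ⟨fun s b => if hs : s < n then cc (⟨s, hs⟩, b) else 0, ?_⟩
  intro j
  have hz : z j = ∑ i, star (vhat j i) * ((Yᵀ) *ᵥ cc) i := by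
    have h1 : M *ᵥ ((Yᵀ) *ᵥ cc) = z := by
      rw [hcc, Matrix.mulVec_mulVec, hMM, Matrix.one_mulVec]
    calc z j = (M *ᵥ ((Yᵀ) *ᵥ cc)) j := by rw [h1]
      _ = ∑ i, star (vhat j i) * ((Yᵀ) *ᵥ cc) i := by
          simp [Matrix.mulVec, dotProduct, hM_def]
  have hR : ∑ i, star (vhat j i) * ((Yᵀ) *ᵥ cc) i
      = ∑ sb : Fin n × Fin k, cc sb * (((lam j : ℂ)) ^ ((sb.1 : ℕ)) * star (v j sb.2)) := by
    calc ∑ i, star (vhat j i) * ((Yᵀ) *ᵥ cc) i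
        = ∑ i, ∑ sb : Fin n × Fin k, star (vhat j i) * (Y sb i * cc sb) := by
          simp [Matrix.mulVec, dotProduct, Matrix.transpose_apply, Finset.mul_sum]
      _ = ∑ sb : Fin n × Fin k, ∑ i, star (vhat j i) * (Y sb i * cc sb) := Finset.sum_comm
      _ = ∑ sb : Fin n × Fin k, cc sb * ∑ i, star (vhat j i) * Y sb i := by
          refine Finset.sum_congr rfl fun sb _ => ?_
          rw [Finset.mul_sum]
          refine Finset.sum_congr rfl fun i _ => ?_
          ring
      _ = ∑ sb : Fin n × Fin k, cc sb * (((lam j : ℂ)) ^ ((sb.1 : ℕ)) * star (v j sb.2)) := by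
          refine Finset.sum_congr rfl fun sb _ => ?_
          congr 1
          exact hGy (sb.1 : ℕ) sb.2 j
  rw [hz, hR]
  rw [Fintype.sum_prod_type]
  rw [Finset.sum_comm]
  refine Finset.sum_congr rfl fun b _ => ?_
  rw [← Fin.sum_univ_eq_sum_range
    (fun s => (if hs : s < n then cc (⟨s, hs⟩, b) else 0) * ((lam j : ℂ)) ^ s) n]
  rw [Finset.mul_sum]
  refine Finset.sum_congr rfl fun s _ => ?_
  rw [dif_pos s.isLt]
  have : (⟨(s : ℕ), s.isLt⟩ : Fin n) = s := Fin.ext rfl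
  rw [this]
  ring

lemma innerPoly_entry {k N : ℕ} (lam : Fin N → ℝ) (v : Fin N → Fin k → ℂ)
    (P Q : Polynomial (Matrix (Fin k) (Fin k) ℂ)) (a a' : Fin k) :
    innerPoly lam v P Q a a' =
      ∑ j, star (∑ b, star (v j b) * P.eval ((lam j : ℂ) • (1 : Matrix (Fin k) (Fin k) ℂ)) b a)
        * (∑ b, star (v j b) * Q.eval ((lam j : ℂ) • (1 : Matrix (Fin k) (Fin k) ℂ)) b a') := by
  unfold innerPoly
  rw [Matrix.sum_apply]
  refine Finset.sum_congr rfl fun j _ => ?_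
  set Pe := P.eval ((lam j : ℂ) • (1 : Matrix (Fin k) (Fin k) ℂ)) with hPe
  set Qe := Q.eval ((lam j : ℂ) • (1 : Matrix (Fin k) (Fin k) ℂ)) with hQe
  calc (Peᴴ * vecMulVec (v j) (star (v j)) * Qe) a a'
      = ∑ c, (∑ b, star (Pe b a) * (v j b * star (v j c))) * Qe c a' := by
        rw [Matrix.mul_apply]
        refine Finset.sum_congr rfl fun c _ => ?_
        congr 1
    _ = ∑ c, ∑ b, star (Pe b a) * (v j b * star (v j c)) * Qe c a' := by
        refine Finset.sum_congr rfl fun c _ => ?_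
        rw [Finset.sum_mul]
    _ = star (∑ b, star (v j b) * Pe b a) * (∑ b, star (v j b) * Qe b a') := by
        rw [star_sum, Finset.sum_mul_sum]
        rw [Finset.sum_comm]
        refine Finset.sum_congr rfl fun c _ => ?_
        refine Finset.sum_congr rfl fun b _ => ?_
        rw [star_mul', star_star]
        ring
    _ = star (∑ b, star (v j b) * P.eval ((lam j : ℂ) • (1 : Matrix (Fin k) (Fin k) ℂ)) b a)
        * (∑ b, star (v j b) * Q.eval ((lam j : ℂ) • (1 : Matrix (Fin k) (Fin k) ℂ)) b a') := by
        rw [hPe, hQe]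

lemma innerPoly_add_left {k N : ℕ} (lam : Fin N → ℝ) (v : Fin N → Fin k → ℂ)
    (P₁ P₂ Q : Polynomial (Matrix (Fin k) (Fin k) ℂ)) :
    innerPoly lam v (P₁ + P₂) Q = innerPoly lam v P₁ Q + innerPoly lam v P₂ Q := by
  unfold innerPoly
  rw [← Finset.sum_add_distrib]
  refine Finset.sum_congr rfl fun j _ => ?_
  rw [Polynomial.eval_add, Matrix.conjTranspose_add, Matrix.add_mul, Matrix.add_mul]

lemma degree_le_iff_lt_succ (p : Polynomial ℂ) (d : ℕ) :
    p.degree ≤ (d : ℕ) ↔ p.degree < ((d + 1 : ℕ) : WithBot ℕ) := by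
  constructor
  · intro h
    refine lt_of_le_of_lt h ?_
    exact_mod_cast Nat.lt_succ_self d
  · intro h
    cases hdeg : p.degree with
    | bot => exact bot_le
    | coe m =>
      rw [hdeg, Nat.cast_withBot] at h
      rw [Nat.cast_withBot]
      exact WithBot.coe_le_coe.mpr (Nat.lt_succ_iff.mp (WithBot.coe_lt_coe.mp h))

def Tmap {k N : ℕ} (lam : Fin N → ℝ) (v : Fin N → Fin k → ℂ) :
    (Fin k → Polynomial ℂ) →ₗ[ℂ] (Fin N → ℂ) where
  toFun p := fun j => ∑ a, star (v j a) * (p a).eval ((lam j : ℂ))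
  map_add' p q := by
    funext j
    simp [mul_add, Finset.sum_add_distrib]
  map_smul' c p := by
    funext j
    simp only [Pi.smul_apply, Polynomial.eval_smul, smul_eq_mul, RingHom.id_apply]
    rw [Finset.mul_sum]
    exact Finset.sum_congr rfl fun a _ => by ring

/-- For the spectral measure of `J ∈ 𝒥_{k,N}` and every `d ≥ n`:
(i) there is a monic matrix polynomial of degree `d` with vanishing Gram matrix;
(ii) `dim 𝒩_d = k(d+1) - N`; (iii) every monic degree-`d` polynomial orthogonal to all
lower degrees has vanishing Gram matrix. -/
theorem degenerate_high_degree_polynomials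
    (k n ℓ : ℕ) (hk : 1 ≤ k) (hn : 2 ≤ n) (hℓ : ℓ < k)
    (J : Matrix (Fin (n * k - ℓ)) (Fin (n * k - ℓ)) ℂ) (hJ : IsJkN k n ℓ J)
    (lam : Fin (n * k - ℓ) → ℝ) (vhat : Fin (n * k - ℓ) → (Fin (n * k - ℓ) → ℂ))
    (heig : ∀ j, J.mulVec (vhat j) = (lam j : ℂ) • vhat j)
    (horth : ∀ i j, ∑ a, star (vhat i a) * vhat j a = if i = j then 1 else 0)
    (v : Fin (n * k - ℓ) → Fin k → ℂ)
    (hv : ∀ j, v j = (Esel k (n * k - ℓ) 0)ᴴ.mulVec (vhat j)) :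
    ∀ d : ℕ, n ≤ d →
      (∃ Pm : Polynomial (Matrix (Fin k) (Fin k) ℂ),
          Pm.Monic ∧ Pm.natDegree = d ∧ innerPoly lam v Pm Pm = 0) ∧
      (∃ S : Submodule ℂ (Fin k → Polynomial ℂ),
          (S : Set (Fin k → Polynomial ℂ)) = NcalSet k (n * k - ℓ) d lam v ∧
          Module.finrank ℂ S = k * (d + 1) - (n * k - ℓ)) ∧
      (∀ Pm : Polynomial (Matrix (Fin k) (Fin k) ℂ),
          Pm.Monic → Pm.natDegree = d →
          (∀ Q : Polynomial (Matrix (Fin k) (Fin k) ℂ), Q.natDegree < d →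
            innerPoly lam v Q Pm = 0) →
          innerPoly lam v Pm Pm = 0) := by
  intro d hd
  haveI : Nonempty (Fin k) := ⟨⟨0, by omega⟩⟩
  have hsurj := key_surj hk hn hℓ J hJ lam vhat heig horth v hv
  -- Part (i): construction of the degenerate monic polynomial Pg
  have hchoice : ∀ a : Fin k, ∃ c : ℕ → Fin k → ℂ, ∀ j,
      ∑ b : Fin k, star (v j b) * (∑ s ∈ Finset.range n, c s b * ((lam j : ℂ)) ^ s)
        = star (v j a) * ((lam j : ℂ)) ^ d := fun a => hsurj _
  choose cf hcf using hchoice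
  set Mt : ℕ → Matrix (Fin k) (Fin k) ℂ := fun t => Matrix.of (fun b a => - cf a t b) with hMt
  set Pg : Polynomial (Matrix (Fin k) (Fin k) ℂ) :=
    Polynomial.monomial d 1 + ∑ t ∈ Finset.range n, Polynomial.monomial t (Mt t) with hPg
  have hdegmon : (Polynomial.monomial d (1 : Matrix (Fin k) (Fin k) ℂ)).degree = (d : ℕ) :=
    Polynomial.degree_monomial d one_ne_zero
  have hlt : (∑ t ∈ Finset.range n, Polynomial.monomial t (Mt t)).degree
      < (Polynomial.monomial d (1 : Matrix (Fin k) (Fin k) ℂ)).degree := by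
    rw [hdegmon]
    refine lt_of_le_of_lt (Polynomial.degree_sum_le _ _) ?_
    rw [Finset.sup_lt_iff (by exact_mod_cast WithBot.bot_lt_coe d)]
    intro t ht
    refine lt_of_le_of_lt (Polynomial.degree_monomial_le t _) ?_
    have htn : t < n := Finset.mem_range.mp ht
    exact_mod_cast (by omega : t < d)
  have hmono : Pg.Monic := by
    have h1 : (Polynomial.monomial d (1 : Matrix (Fin k) (Fin k) ℂ)).Monic := by
      rw [← Polynomial.X_pow_eq_monomial]
      exact Polynomial.monic_X_pow d
    exact h1.add_of_left hlt
  have hdegPg : Pg.natDegree = d := by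
    have hdeg : Pg.degree = (d : ℕ) := by
      rw [hPg, Polynomial.degree_add_eq_left_of_degree_lt hlt, hdegmon]
    exact Polynomial.natDegree_eq_of_degree_eq_some hdeg
  have hEval : ∀ (x : ℂ) (b a : Fin k),
      Pg.eval (x • (1 : Matrix (Fin k) (Fin k) ℂ)) b a
        = x ^ d * ((1 : Matrix (Fin k) (Fin k) ℂ) b a)
          + ∑ t ∈ Finset.range n, x ^ t * (Mt t b a) := by
    intro x b a
    have hxp : ∀ t : ℕ, (x • (1 : Matrix (Fin k) (Fin k) ℂ)) ^ t
        = x ^ t • (1 : Matrix (Fin k) (Fin k) ℂ) := by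
      intro t; rw [_root_.smul_pow, one_pow]
    rw [hPg, Polynomial.eval_add, Polynomial.eval_finset_sum, Polynomial.eval_monomial]
    rw [Matrix.add_apply, Matrix.sum_apply]
    congr 1
    · rw [hxp d, one_mul, Matrix.smul_apply, smul_eq_mul]
    · refine Finset.sum_congr rfl fun t _ => ?_
      rw [Polynomial.eval_monomial, hxp t, mul_smul_comm, mul_one, Matrix.smul_apply, smul_eq_mul]
  have hw0 : ∀ (j : Fin (n * k - ℓ)) (a : Fin k),
      ∑ b, star (v j b) * Pg.eval ((lam j : ℂ) • (1 : Matrix (Fin k) (Fin k) ℂ)) b a = 0 := by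
    intro j a
    have h1 : ∑ b, star (v j b) * ((lam j : ℂ) ^ d * (1 : Matrix (Fin k) (Fin k) ℂ) b a)
        = star (v j a) * (lam j : ℂ) ^ d := by
      rw [Finset.sum_eq_single a]
      · rw [Matrix.one_apply_eq, mul_one]
      · intro b _ hb
        rw [Matrix.one_apply_ne hb, mul_zero, mul_zero]
      · intro hmem; exact absurd (Finset.mem_univ _) hmem
    have h2 : ∑ b, star (v j b) * ∑ t ∈ Finset.range n, (lam j : ℂ) ^ t * Mt t b a
        = - (star (v j a) * (lam j : ℂ) ^ d) := by
      have hb : ∀ b : Fin k, ∑ t ∈ Finset.range n, (lam j : ℂ) ^ t * Mt t b a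
          = - ∑ t ∈ Finset.range n, cf a t b * (lam j : ℂ) ^ t := by
        intro b
        rw [← Finset.sum_neg_distrib]
        refine Finset.sum_congr rfl fun t _ => ?_
        rw [hMt]
        simp only [Matrix.of_apply]
        ring
      calc ∑ b, star (v j b) * ∑ t ∈ Finset.range n, (lam j : ℂ) ^ t * Mt t b a
          = ∑ b, - (star (v j b) * ∑ t ∈ Finset.range n, cf a t b * (lam j : ℂ) ^ t) := by
            refine Finset.sum_congr rfl fun b _ => ?_
            rw [hb b]; ring
        _ = - ∑ b, star (v j b) * ∑ t ∈ Finset.range n, cf a t b * (lam j : ℂ) ^ t :=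
            Finset.sum_neg_distrib _
        _ = - (star (v j a) * (lam j : ℂ) ^ d) := by rw [hcf a j]
    calc ∑ b, star (v j b) * Pg.eval ((lam j : ℂ) • (1 : Matrix (Fin k) (Fin k) ℂ)) b a
        = ∑ b, (star (v j b) * ((lam j : ℂ) ^ d * (1 : Matrix (Fin k) (Fin k) ℂ) b a)
            + star (v j b) * ∑ t ∈ Finset.range n, (lam j : ℂ) ^ t * Mt t b a) := by
          refine Finset.sum_congr rfl fun b _ => ?_
          rw [hEval, mul_add]
      _ = (∑ b, star (v j b) * ((lam j : ℂ) ^ d * (1 : Matrix (Fin k) (Fin k) ℂ) b a))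
          + ∑ b, star (v j b) * ∑ t ∈ Finset.range n, (lam j : ℂ) ^ t * Mt t b a :=
          Finset.sum_add_distrib
      _ = 0 := by rw [h1, h2]; ring
  have hip : innerPoly lam v Pg Pg = 0 := by
    ext a a'
    rw [innerPoly_entry]
    simp only [Matrix.zero_apply]
    apply Finset.sum_eq_zero
    intro j _
    rw [hw0 j a, star_zero, zero_mul]
  -- Part (ii)
  haveI : FiniteDimensional ℂ (Polynomial.degreeLT ℂ (d + 1) : Submodule ℂ (Polynomial ℂ)) :=
    Module.Finite.equiv (Polynomial.degreeLTEquiv ℂ (d + 1)).symm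
  set ι : (Fin k → (Polynomial.degreeLT ℂ (d + 1) : Submodule ℂ (Polynomial ℂ)))
      →ₗ[ℂ] (Fin k → Polynomial ℂ) :=
    LinearMap.pi (fun a => (Polynomial.degreeLT ℂ (d + 1)).subtype.comp (LinearMap.proj a))
    with hι
  have hιinj : Function.Injective ι := by
    intro p q h
    funext a
    exact Subtype.ext (congrFun h a)
  set g := (Tmap lam v).comp ι with hg
  have hgapply : ∀ q j, g q j = ∑ a, star (v j a) * ((q a : Polynomial ℂ)).eval ((lam j : ℂ)) :=
    fun q j => rfl
  have hgsurj : Function.Surjective g := by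
    intro z
    obtain ⟨c, hc⟩ := hsurj z
    refine ⟨fun b => ⟨∑ s ∈ Finset.range n, Polynomial.C (c s b) * Polynomial.X ^ s, ?_⟩, ?_⟩
    · rw [Polynomial.mem_degreeLT]
      refine lt_of_le_of_lt (Polynomial.degree_sum_le _ _) ?_
      rw [Finset.sup_lt_iff (by exact_mod_cast WithBot.bot_lt_coe (d + 1))]
      intro t ht
      rw [Polynomial.C_mul_X_pow_eq_monomial]
      refine lt_of_le_of_lt (Polynomial.degree_monomial_le t _) ?_
      have htn : t < n := Finset.mem_range.mp ht
      exact_mod_cast (by omega : t < d + 1)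
    · funext j
      rw [hgapply, ← hc j]
      refine Finset.sum_congr rfl fun b _ => ?_
      congr 1
      rw [Polynomial.eval_finset_sum]
      refine Finset.sum_congr rfl fun s _ => ?_
      simp
  set S : Submodule ℂ (Fin k → Polynomial ℂ) := Submodule.map ι (LinearMap.ker g) with hS
  have hSset : (S : Set (Fin k → Polynomial ℂ)) = NcalSet k (n * k - ℓ) d lam v := by
    ext p
    constructor
    · rintro ⟨q, hq, rfl⟩
      rw [SetLike.mem_coe, LinearMap.mem_ker] at hq
      constructor
      · intro a
        have hm := (q a).2
        rw [Polynomial.mem_degreeLT] at hm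
        have hqa : (ι q) a = (q a : Polynomial ℂ) := rfl
        rw [hqa]
        exact (degree_le_iff_lt_succ _ d).mpr (by exact_mod_cast hm)
      · apply Finset.sum_eq_zero
        intro j _
        have hz : ∑ a, star (v j a) * ((ι q) a).eval ((lam j : ℂ)) = 0 := by
          have := congrFun hq j
          exact this
        rw [hz]
        simp
    · rintro ⟨hdeg, hsum⟩
      refine ⟨fun a => ⟨p a, Polynomial.mem_degreeLT.mpr
        (by exact_mod_cast (degree_le_iff_lt_succ _ d).mp (hdeg a))⟩, ?_, rfl⟩
      rw [SetLike.mem_coe, LinearMap.mem_ker]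
      funext j
      have hj : Complex.normSq (∑ a, star (v j a) * (p a).eval ((lam j : ℂ))) = 0 :=
        (Finset.sum_eq_zero_iff_of_nonneg (fun j' _ => Complex.normSq_nonneg _)).mp hsum j
          (Finset.mem_univ j)
      have := Complex.normSq_eq_zero.mp hj
      exact this
  have hfinS : Module.finrank ℂ S = k * (d + 1) - (n * k - ℓ) := by
    have hfd : Module.finrank ℂ
        (Polynomial.degreeLT ℂ (d + 1) : Submodule ℂ (Polynomial ℂ)) = d + 1 := by
      rw [(Polynomial.degreeLTEquiv ℂ (d + 1)).finrank_eq, Module.finrank_fintype_fun_eq_card,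
        Fintype.card_fin]
    have hfinW : Module.finrank ℂ
        (Fin k → (Polynomial.degreeLT ℂ (d + 1) : Submodule ℂ (Polynomial ℂ))) = k * (d + 1) := by
      rw [Module.finrank_pi_fintype]
      simp [hfd, Finset.sum_const, Finset.card_univ]
    have hrn := LinearMap.finrank_range_add_finrank_ker g
    have hrange : Module.finrank ℂ (LinearMap.range g) = n * k - ℓ := by
      rw [LinearMap.range_eq_top.mpr hgsurj, finrank_top, Module.finrank_fintype_fun_eq_card,
        Fintype.card_fin]
    have hker : Module.finrank ℂ (LinearMap.ker g) = k * (d + 1) - (n * k - ℓ) := by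
      rw [hfinW, hrange] at hrn
      omega
    rw [hS, ← hker]
    exact ((Submodule.equivMapOfInjective ι hιinj (LinearMap.ker g)).symm.finrank_eq)
  refine ⟨⟨Pg, hmono, hdegPg, hip⟩, ⟨S, hSset, hfinS⟩, ?_⟩
  -- Part (iii)
  intro Pm hPmMonic hPmdeg hortho
  by_cases h0 : Pm - Pg = 0
  · have hPmPg : Pm = Pg := sub_eq_zero.mp h0
    rw [hPmPg]
    exact hip
  · have hdlt : (Pm - Pg).natDegree < d := by
      rw [Polynomial.natDegree_lt_iff_degree_lt h0]
      have hdePm : Pm.degree = (d : ℕ) := by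
        rw [Polynomial.degree_eq_natDegree hPmMonic.ne_zero, hPmdeg]
      have hdePg : Pg.degree = (d : ℕ) := by
        rw [Polynomial.degree_eq_natDegree hmono.ne_zero, hdegPg]
      have := Polynomial.degree_sub_lt (hdePm.trans hdePg.symm) hPmMonic.ne_zero
        (by rw [hPmMonic.leadingCoeff, hmono.leadingCoeff])
      rwa [hdePm] at this
    have h1 := hortho (Pm - Pg) hdlt
    have h2 : innerPoly lam v Pg Pm = 0 := by
      ext a a'
      rw [innerPoly_entry]
      simp only [Matrix.zero_apply]
      apply Finset.sum_eq_zero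
      intro j _
      rw [hw0 j a, star_zero, zero_mul]
    have hsplit : Pm = (Pm - Pg) + Pg := (sub_add_cancel Pm Pg).symm
    calc innerPoly lam v Pm Pm = innerPoly lam v ((Pm - Pg) + Pg) Pm := by rw [← hsplit]
      _ = innerPoly lam v (Pm - Pg) Pm + innerPoly lam v Pg Pm :=
          innerPoly_add_left lam v _ _ _
      _ = 0 := by rw [h1, h2, add_zero]
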